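/- Let (X, A, f, α) be an invertible micro-macro dynamical system and suppose there exists a map t : A → A and ε ∈ [0, 1/2) such that T_{t(b)b} ≥ 1 − ε for all b ∈ A, and moreover ε is small enough that S(a) < S(b) implies S(a) < S(b) + ln(1 − ε) for all a, b ∈ A. Then |D| ≤ ε|X|. -/

import Mathlib

open Finset

/-- If the stochastic map is nearly deterministic (`T_{t(b)b} ≥ 1 - ε`) and `ε` is
small enough that `S(a) < S(b)` implies `S(a) < S(b) + ln(1-ε)`, then `|D| ≤ ε|X|`. -/
theorem stmt7 {X A : Type*} [Fintype X] [Fintype A] [DecidableEq A]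
    (f : X → A) (hf : Function.Surjective f) (α : X ≃ X)
    (fib : A → ℕ) (hfib : ∀ a, fib a = (univ.filter (fun i => f i = a)).card)
    (S : A → ℝ) (hS : ∀ a, S a = Real.log (fib a))
    (T : A → A → ℝ)
    (hT : ∀ a b, T a b = ((univ.filter (fun i => f i = b ∧ f (α i) = a)).card : ℝ) / fib b)
    (t : A → A) (ε : ℝ) (hε : ε ∈ Set.Ico (0 : ℝ) (1 / 2))
    (ht : ∀ b, 1 - ε ≤ T (t b) b)
    (hsmall : ∀ a b, S a < S b → S a < S b + Real.log (1 - ε)) :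
    ((univ.filter (fun i => S (f (α i)) < S (f i))).card : ℝ) ≤ ε * Fintype.card X := by
  classical
  have hε0 : (0:ℝ) ≤ ε := hε.1
  have h1ε : (0:ℝ) < 1 - ε := by have := hε.2; linarith
  have hfibpos : ∀ b, 0 < fib b := by
    intro b
    rw [hfib]
    obtain ⟨i, hi⟩ := hf b
    exact Finset.card_pos.mpr ⟨i, by simp [hi]⟩
  set E : A → Finset X := fun b => univ.filter (fun i => f i = b ∧ f (α i) = t b) with hE
  have hNb : ∀ b, (1 - ε) * fib b ≤ ((E b).card : ℝ) := by
    intro b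
    have hTb := ht b
    rw [hT] at hTb
    have hfb : (0:ℝ) < fib b := by exact_mod_cast hfibpos b
    rw [le_div_iff₀ hfb] at hTb
    exact hTb
  -- key: S (t b) is not less than S b
  have hkey : ∀ b, ¬ S (t b) < S b := by
    intro b hlt
    have hmono : ((E b).card : ℝ) ≤ fib (t b) := by
      rw [hfib]
      have : (E b).card ≤ (univ.filter (fun j => f j = t b)).card := by
        apply Finset.card_le_card_of_injOn (fun i => α i)
        · intro i hi
          simp only [hE, Finset.mem_coe, mem_filter, mem_univ, true_and] at hi ⊢
          exact hi.2
        · intro i _ j _ h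
          exact α.injective h
      exact_mod_cast this
    have hle : S b + Real.log (1 - ε) ≤ S (t b) := by
      rw [hS, hS]
      have hlog : Real.log ((1 - ε) * fib b) ≤ Real.log (fib (t b)) :=
        Real.log_le_log (mul_pos h1ε (by exact_mod_cast hfibpos b))
          (le_trans (hNb b) hmono)
      rwa [Real.log_mul (ne_of_gt h1ε)
        (by exact_mod_cast (hfibpos b).ne'), add_comm] at hlog
    exact absurd (hsmall _ _ hlt) (not_lt.mpr hle)
  set D : Finset X := univ.filter (fun i => S (f (α i)) < S (f i)) with hD
  have hcardD : D.card = ∑ b : A, (D.filter (fun i => f i = b)).card :=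
    Finset.card_eq_sum_card_fiberwise (fun i _ => mem_univ (f i))
  have hcardX : Fintype.card X = ∑ b : A, fib b := by
    rw [Fintype.card, Finset.card_eq_sum_card_fiberwise (f := f) (fun i _ => mem_univ (f i))]
    exact Finset.sum_congr rfl (fun b _ => (hfib b).symm)
  have hbound : ∀ b, ((D.filter (fun i => f i = b)).card : ℝ) ≤ ε * fib b := by
    intro b
    have hdisj : Disjoint (D.filter (fun i => f i = b)) (E b) := by
      rw [Finset.disjoint_left]
      intro i hi hi'
      simp only [hD, mem_filter, mem_univ, true_and] at hi
      simp only [hE, mem_filter, mem_univ, true_and] at hi'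
      exact hkey b (by rw [← hi'.2, ← hi.2]; exact hi.1)
    have hsub : (D.filter (fun i => f i = b)) ∪ E b ⊆ univ.filter (fun i => f i = b) := by
      intro i hi
      rcases Finset.mem_union.mp hi with h | h
      · simp only [mem_filter, mem_univ, true_and] at h ⊢
        exact h.2
      · simp only [hE, mem_filter, mem_univ, true_and] at h ⊢
        exact h.1
    have hcards : (D.filter (fun i => f i = b)).card + (E b).card ≤ fib b := by
      rw [hfib, ← Finset.card_union_of_disjoint hdisj]
      exact Finset.card_le_card hsub
    have hcards' : ((D.filter (fun i => f i = b)).card : ℝ) + (E b).card ≤ fib b := by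
      exact_mod_cast hcards
    have := hNb b
    linarith
  calc (D.card : ℝ) = ∑ b : A, ((D.filter (fun i => f i = b)).card : ℝ) := by
        rw [hcardD]; push_cast; ring
    _ ≤ ∑ b : A, ε * fib b := Finset.sum_le_sum (fun b _ => hbound b)
    _ = ε * Fintype.card X := by rw [hcardX]; push_cast; rw [Finset.mul_sum]
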